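/- Let G be a finite group, k ≥ 1 an integer, and fix signs t_0,…,t_{k−1} ∈ {+,−}. On H = (ℂ^G)^{⊗k} let T_i^g denote the operator acting as T^g_{t_i} on the i-th tensor factor and as the identity elsewhere, and define the plaquette operator B = ∑ T_0^{g_0} T_1^{g_1} ⋯ T_{k−1}^{g_{k−1}}, the sum over all tuples (g_0,…,g_{k−1}) ∈ G^k with g_0 g_1 ⋯ g_{k−1} = 1. On H ⊗ ℂ^G define M_i = ∑_{g∈G} T_i^g ⊗ L^g_+ (the auxiliary factor carries L^g_+) and |Ψ⟩ = |1⟩ in the auxiliary factor. Then (1_H ⊗ ⟨Ψ|) M_0 M_1 ⋯ M_{k−1} (1_H ⊗ |Ψ⟩) = B and (1_H ⊗ ⟨Ψ|) M_{k−1}† ⋯ M_1† M_0† (1_H ⊗ |Ψ⟩) = B. -/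

import Mathlib

open Matrix Kronecker BigOperators

noncomputable section

variable {G : Type*} [Group G] [Fintype G] [DecidableEq G]

/-- `L^g_+ : |z⟩ ↦ |gz⟩` (left multiplication by `g`). -/
def Lp (g : G) : Matrix G G ℂ := Matrix.of fun x z => if x = g * z then 1 else 0

/-- `L^g_- : |z⟩ ↦ |z g⁻¹⟩` (right multiplication by `g⁻¹`). -/
def Lm (g : G) : Matrix G G ℂ := Matrix.of fun x z => if x = z * g⁻¹ then 1 else 0

/-- `T^g_+ = |g⟩⟨g|`. -/
def Tp (g : G) : Matrix G G ℂ := Matrix.of fun x z => if x = g ∧ z = g then 1 else 0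

/-- `T^g_- = |g⁻¹⟩⟨g⁻¹|`. -/
def Tm (g : G) : Matrix G G ℂ := Tp g⁻¹

/-- Signed `L` operator: `true` stands for `+`, `false` for `−`. -/
def Lsgn (s : Bool) (g : G) : Matrix G G ℂ := if s then Lp g else Lm g

/-- Signed `T` operator: `true` stands for `+`, `false` for `−`. -/
def Tsgn (s : Bool) (g : G) : Matrix G G ℂ := if s then Tp g else Tm g

/-- The operator acting as `A` on the `i`-th tensor factor of `(ℂ^G)^{⊗k}`
and as the identity on all other factors. -/
def factor {k : ℕ} (i : Fin k) (A : Matrix G G ℂ) : Matrix (Fin k → G) (Fin k → G) ℂ :=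
  Matrix.of fun x y => if ∀ j, j ≠ i → x j = y j then A (x i) (y i) else 0

/-- The partial matrix element `(1_H ⊗ ⟨ψ|) Z (1_H ⊗ |ψ⟩)` of an operator `Z` on `H ⊗ ℂ^R`. -/
def pme {H R : Type*} [Fintype R] (ψ : R → ℂ) (Z : Matrix (H × R) (H × R) ℂ) :
    Matrix H H ℂ :=
  Matrix.of fun x y => ∑ a : R, ∑ b : R, (starRingEnd ℂ) (ψ a) * Z (x, a) (y, b) * ψ b

lemma Lp_one : (Lp (1 : G)) = 1 := by
  ext x z
  simp [Lp, Matrix.one_apply]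

lemma Lp_mul (g h : G) : Lp g * Lp h = Lp (g * h) := by
  ext x z
  simp only [Lp, Matrix.mul_apply, Matrix.of_apply]
  rw [Finset.sum_eq_single (h * z)]
  · simp [mul_assoc]
  · intro b _ hb
    simp [hb]
  · simp

lemma key {n : Type*} [Fintype n] [DecidableEq n] (m : ℕ) (A : Fin m → G → Matrix n n ℂ) :
    (List.ofFn fun i => ∑ g : G, A i g ⊗ₖ Lp g).prod
      = ∑ c : Fin m → G, ((List.ofFn fun i => A i (c i)).prod ⊗ₖ Lp (List.ofFn c).prod) := by
  induction m with
  | zero => simp [Lp_one, Matrix.one_kronecker_one]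
  | succ m ih =>
    rw [List.ofFn_succ, List.prod_cons, ih fun j g => A j.succ g]
    rw [← (Fin.consEquiv (fun _ : Fin (m+1) => G)).sum_comp
          (fun c => ((List.ofFn fun i => A i (c i)).prod ⊗ₖ Lp (List.ofFn c).prod))]
    rw [Fintype.sum_prod_type, Finset.sum_mul_sum]
    refine Finset.sum_congr rfl fun g _ => Finset.sum_congr rfl fun c _ => ?_
    simp only [Fin.consEquiv_apply, List.ofFn_succ, Fin.cons_zero, Fin.cons_succ,
      List.prod_cons]
    rw [← Lp_mul, Matrix.mul_kronecker_mul]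

lemma pme_eq {H : Type*} (ψ : G → ℂ) (hψ : ∀ g, ψ g = if g = 1 then 1 else 0)
    (Z : Matrix (H × G) (H × G) ℂ) :
    pme ψ Z = Matrix.of fun x y => Z (x, 1) (y, 1) := by
  ext x y
  simp [pme, hψ, apply_ite (starRingEnd ℂ), ite_mul, mul_ite]


lemma pme_conjT {H : Type*} [Fintype H] [DecidableEq H]
    (ψ : G → ℂ) (hψ : ∀ g, ψ g = if g = 1 then 1 else 0)
    (Z : Matrix ((H × G)) ((H × G)) ℂ) :
    pme ψ Zᴴ = (pme ψ Z)ᴴ := by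
  rw [pme_eq ψ hψ, pme_eq ψ hψ]
  ext x y
  simp [Matrix.conjTranspose_apply]

lemma Tsgn_herm (s : Bool) (g : G) : (Tsgn s g)ᴴ = Tsgn s g := by
  have h : ∀ h : G, (Tp h)ᴴ = Tp h := by
    intro h
    ext x z
    simp [Tp, Matrix.conjTranspose_apply, apply_ite star, and_comm]
  cases s <;> simp [Tsgn, Tm, h]

lemma factor_conjT {k : ℕ} (i : Fin k) (A : Matrix G G ℂ) :
    (factor i A)ᴴ = factor i Aᴴ := by
  ext x y
  simp only [Matrix.conjTranspose_apply, factor, Matrix.of_apply, apply_ite star, star_zero]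
  by_cases h : ∀ j, j ≠ i → x j = y j
  · rw [if_pos h, if_pos (fun j hj => (h j hj).symm)]
  · rw [if_neg h, if_neg (fun hc => h fun j hj => (hc j hj).symm)]

lemma factor_mul_factor {k : ℕ} (i j : Fin k) (hij : i ≠ j) (A B : Matrix G G ℂ) :
    factor i A * factor j B = Matrix.of fun x y =>
      if ∀ m, m ≠ i → m ≠ j → x m = y m then A (x i) (y i) * B (x j) (y j) else 0 := by
  ext x y
  rw [Matrix.mul_apply]
  rw [Finset.sum_eq_single (Function.update y j (x j))]
  · simp only [factor, Matrix.of_apply]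
    have h1 : Function.update y j (x j) i = y i := Function.update_of_ne hij _ _
    have h2 : Function.update y j (x j) j = x j := Function.update_self _ _ _
    have h3 : ∀ m, m ≠ j → Function.update y j (x j) m = y m :=
      fun m hm => Function.update_of_ne hm _ _
    rw [if_pos h3, h1, h2]
    have : (∀ m, m ≠ i → x m = Function.update y j (x j) m) ↔
        (∀ m, m ≠ i → m ≠ j → x m = y m) := by
      constructor
      · intro h m hmi hmj
        rw [h m hmi, h3 m hmj]
      · intro h m hmi
        by_cases hmj : m = j
        · subst hmj; rw [h2]
        · rw [h3 m hmj]; exact h m hmi hmj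
    by_cases hc : ∀ m, m ≠ i → m ≠ j → x m = y m
    · rw [if_pos (this.mpr hc), if_pos hc]
    · rw [if_neg (fun hx => hc (this.mp hx)), if_neg hc, zero_mul]
  · intro z _ hz
    simp only [factor, Matrix.of_apply]
    by_cases c1 : ∀ m, m ≠ i → x m = z m
    · by_cases c2 : ∀ m, m ≠ j → z m = y m
      · exfalso
        apply hz
        funext m
        by_cases hmj : m = j
        · rw [hmj, Function.update_self]
          exact (c1 j hij.symm).symm
        · rw [Function.update_of_ne hmj]
          exact c2 m hmj
      · rw [if_neg c2, mul_zero]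
    · rw [if_neg c1, zero_mul]
  · simp

lemma factor_commute {k : ℕ} {i j : Fin k} (hij : i ≠ j) (A B : Matrix G G ℂ) :
    Commute (factor i A) (factor j B) := by
  unfold Commute SemiconjBy
  rw [factor_mul_factor i j hij, factor_mul_factor j i hij.symm]
  ext x y
  simp only [Matrix.of_apply]
  by_cases h : ∀ m, m ≠ i → m ≠ j → x m = y m
  · rw [if_pos h, if_pos (fun m h1 h2 => h m h2 h1)]
    ring
  · rw [if_neg h, if_neg (fun hc => h fun m h1 h2 => hc m h2 h1)]

lemma prod_factor_herm {k : ℕ} (F : Fin k → Matrix G G ℂ) (hF : ∀ i, (F i)ᴴ = F i) :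
    (((List.finRange k).map fun i => factor i (F i)).prod)ᴴ
      = ((List.finRange k).map fun i => factor i (F i)).prod := by
  rw [Matrix.conjTranspose_list_prod, List.map_map]
  have : (Matrix.conjTranspose ∘ fun i => factor i (F i)) = fun i => factor i (F i) := by
    funext i
    simp [Function.comp, factor_conjT, hF]
  rw [this]
  refine (List.reverse_perm _).prod_eq' ?_
  rw [List.pairwise_reverse]
  exact List.Pairwise.map _ (fun a b hab => (factor_commute hab _ _).symm)
    (List.nodup_finRange k)

/-- The plaquette operator `B = ∑_{g₀g₁⋯g_{k-1}=1} T₀^{g₀} ⋯ T_{k-1}^{g_{k-1}}`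
is obtained as the partial matrix element, in the state `|Ψ⟩ = |1⟩` of the auxiliary register,
of the ordered product of the operators `Mᵢ = ∑_g Tᵢ^g ⊗ L^g₊`, and also of the reversed
product of their adjoints. -/
theorem statement1 (k : ℕ) (hk : 1 ≤ k) (t : Fin k → Bool)
    (T : Fin k → G → Matrix (Fin k → G) (Fin k → G) ℂ)
    (hT : ∀ i g, T i g = factor i (Tsgn (t i) g))
    (B : Matrix (Fin k → G) (Fin k → G) ℂ)
    (hB : B = ∑ a ∈ Finset.univ.filter
        (fun a : Fin k → G => ((List.finRange k).map a).prod = 1),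
      ((List.finRange k).map (fun i => T i (a i))).prod)
    (M : Fin k → Matrix ((Fin k → G) × G) ((Fin k → G) × G) ℂ)
    (hM : ∀ i, M i = ∑ g : G, (T i g) ⊗ₖ Lp g)
    (ψ : G → ℂ) (hψ : ∀ g, ψ g = if g = 1 then 1 else 0) :
    pme ψ (((List.finRange k).map M).prod) = B ∧
    pme ψ ((((List.finRange k).reverse).map (fun i => (M i)ᴴ)).prod) = B := by
  have hM' : M = fun i => ∑ g : G, (T i g) ⊗ₖ Lp g := funext hM
  have h1 : pme ψ (((List.finRange k).map M).prod) = B := by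
    rw [hM', ← List.ofFn_eq_map, key k T, pme_eq ψ hψ, hB, Finset.sum_filter]
    ext x y
    simp only [Matrix.of_apply, Matrix.sum_apply, Matrix.kroneckerMap_apply, Lp,
      List.ofFn_eq_map]
    refine Finset.sum_congr rfl fun c _ => ?_
    by_cases h : ((List.finRange k).map c).prod = 1
    · rw [mul_one, if_pos h.symm, if_pos h, mul_one]
    · rw [mul_one, if_neg (fun hh => h hh.symm), mul_zero, if_neg h, Matrix.zero_apply]
  have hBh : Bᴴ = B := by
    rw [hB, Matrix.conjTranspose_sum]
    refine Finset.sum_congr rfl fun a _ => ?_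
    simp only [hT]
    exact prod_factor_herm _ (fun i => Tsgn_herm _ _)
  refine ⟨h1, ?_⟩
  have hrev : (((List.finRange k).reverse).map fun i => (M i)ᴴ).prod
      = ((((List.finRange k).map M).prod))ᴴ := by
    rw [Matrix.conjTranspose_list_prod, List.map_map, ← List.map_reverse]
    rfl
  rw [hrev, pme_conjT ψ hψ, h1, hBh]
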